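/- There exists an absolute constant C > 0 such that for all real u ≥ 0 and v ≥ 1, one has | Σ_{u < r ≤ u+v} K_r − v | ≤ C, where r runs over positive integers with u < r ≤ u + v. -/

import Mathlib

open scoped Classical

/-- `K_r = ∏_{ℓ | r} (1 - ℓ⁻²)⁻¹ · ∏_{ℓ ∤ r} ℓ(ℓ² - ℓ - 1)/((ℓ-1)(ℓ²-1))`, products over primes. -/
noncomputable def Kr (r : ℕ) : ℝ :=
  (∏ l ∈ r.primeFactors, (1 - ((l : ℝ) ^ 2)⁻¹)⁻¹) *
    ∏' l : {l : ℕ // l.Prime ∧ ¬ (l ∣ r)},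
      ((l.1 : ℝ) * ((l.1 : ℝ) ^ 2 - l.1 - 1)) / (((l.1 : ℝ) - 1) * ((l.1 : ℝ) ^ 2 - 1))

namespace KrAux

noncomputable def hh (p : ℕ) : ℝ := (((p : ℝ) ^ 2 - p - 1))⁻¹

noncomputable def f0 (p : ℕ) : ℝ :=
  ((p : ℝ) * ((p : ℝ) ^ 2 - p - 1)) / (((p : ℝ) - 1) * ((p : ℝ) ^ 2 - 1))

noncomputable def w (d : ℕ) : ℝ :=
  if Squarefree d then ∏ p ∈ d.primeFactors, hh p else 0

noncomputable def cc : ℝ := ∑' n : ℕ, (((n:ℝ)^2))⁻¹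

lemma two_le_real {p : ℕ} (hp : p.Prime) : (2 : ℝ) ≤ p := by exact_mod_cast hp.two_le

lemma key_ge {p : ℕ} (hp : p.Prime) : (1 : ℝ) ≤ (p : ℝ) ^ 2 - p - 1 := by
  nlinarith [two_le_real hp]

lemma denom_pos {p : ℕ} (hp : p.Prime) : (0 : ℝ) < ((p : ℝ) - 1) * ((p : ℝ) ^ 2 - 1) := by
  nlinarith [two_le_real hp]

lemma hh_nonneg {p : ℕ} (hp : p.Prime) : 0 ≤ hh p := by
  have := key_ge hp; rw [hh]; positivity

lemma f0_pos {p : ℕ} (hp : p.Prime) : 0 < f0 p := by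
  have h1 := key_ge hp
  have h2 := denom_pos hp
  have h3 := two_le_real hp
  rw [f0]
  apply div_pos _ h2
  nlinarith

lemma f0_ne {p : ℕ} (hp : p.Prime) : f0 p ≠ 0 := (f0_pos hp).ne'

lemma f0_inv {p : ℕ} (hp : p.Prime) : (f0 p)⁻¹ = 1 + hh p / p := by
  have h1 := key_ge hp
  have h2 := denom_pos hp
  have h3 := two_le_real hp
  rw [f0, hh]
  rw [inv_div]
  rw [div_eq_iff (by nlinarith)]
  have h8 : (p:ℝ) * (p - 1) - 1 ≠ 0 := by nlinarith
  field_simp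
  ring

lemma one_sub_inv {p : ℕ} (hp : p.Prime) :
    (1 - ((p : ℝ) ^ 2)⁻¹)⁻¹ = f0 p * (1 + hh p) := by
  have h1 := key_ge hp
  have h2 := denom_pos hp
  have h3 := two_le_real hp
  have hp0 : (0:ℝ) < p := by linarith
  rw [f0, hh]
  have h4 : ((p:ℝ)^2 - 1) ≠ 0 := by nlinarith
  have h5 : ((p:ℝ) - 1) ≠ 0 := by nlinarith
  have h6 : (p:ℝ) ≠ 0 := by nlinarith
  have h7 : ((p:ℝ)^2 - p - 1) ≠ 0 := by nlinarith
  have h8 : (p:ℝ) * (p - 1) - 1 ≠ 0 := by nlinarith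
  rw [show (1 - ((p : ℝ) ^ 2)⁻¹) = ((p:ℝ)^2 - 1)/((p:ℝ)^2) by field_simp, inv_div]
  field_simp
  ring

lemma hh_le {p : ℕ} (hp : p.Prime) : hh p ≤ 4 * (((p:ℝ)^2))⁻¹ := by
  have h1 := key_ge hp
  have h3 := two_le_real hp
  rw [hh, show (4:ℝ) * (((p:ℝ)^2))⁻¹ = (((p:ℝ)^2/4))⁻¹ by rw [inv_div]; ring]
  apply inv_anti₀ (by nlinarith)
  nlinarith

lemma w_nonneg (d : ℕ) : 0 ≤ w d := by
  rw [w]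
  split
  · exact Finset.prod_nonneg fun p hp => hh_nonneg (Nat.prime_of_mem_primeFactors hp)
  · exact le_refl 0

lemma squarefree_prod {t : Finset ℕ} (ht : ∀ p ∈ t, p.Prime) :
    Squarefree (∏ p ∈ t, p) := by
  induction t using Finset.induction_on with
  | empty => simpa using squarefree_one
  | @insert a s hx ih =>
    rw [Finset.prod_insert hx]
    have ha : a.Prime := ht a (Finset.mem_insert_self a s)
    have hcop : a.Coprime (∏ p ∈ s, p) := by
      apply Nat.Coprime.prod_right
      intro q hq
      exact (Nat.coprime_primes ha (ht q (Finset.mem_insert_of_mem hq))).mpr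
        (fun h => hx (h ▸ hq))
    rw [Nat.squarefree_mul hcop]
    exact ⟨ha.squarefree, ih fun p hp => ht p (Finset.mem_insert_of_mem hp)⟩

lemma w_prod {t : Finset ℕ} (ht : ∀ p ∈ t, p.Prime) :
    w (∏ p ∈ t, p) = ∏ p ∈ t, hh p := by
  rw [w, if_pos (squarefree_prod ht), Nat.primeFactors_prod ht]

lemma w_one : w 1 = 1 := by
  have := w_prod (t := (∅ : Finset ℕ)) (by simp)
  simpa using this


lemma summable_sq : Summable (fun n : ℕ => (((n:ℝ)^2))⁻¹) := by
  simpa using Real.summable_nat_pow_inv.mpr (by norm_num : 1 < 2)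

lemma sum_hh_le {P : Finset ℕ} (hP : ∀ p ∈ P, p.Prime) : ∑ p ∈ P, hh p ≤ 4 * cc := by
  calc ∑ p ∈ P, hh p ≤ ∑ p ∈ P, 4 * (((p:ℝ)^2))⁻¹ :=
        Finset.sum_le_sum fun p hp => hh_le (hP p hp)
    _ = 4 * ∑ p ∈ P, (((p:ℝ)^2))⁻¹ := by rw [Finset.mul_sum]
    _ ≤ 4 * cc := by
        have : ∑ p ∈ P, (((p:ℝ)^2))⁻¹ ≤ cc :=
          Summable.sum_le_tsum P (fun n _ => by positivity) summable_sq
        linarith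

lemma sum_w_le (A : Finset ℕ) : ∑ d ∈ A, w d ≤ Real.exp (4 * cc) := by
  classical
  set N := A.sup id with hN
  set P : Finset ℕ := (Finset.range (N+1)).filter Nat.Prime with hPdef
  have hP : ∀ p ∈ P, p.Prime := fun p hp => (Finset.mem_filter.mp hp).2
  have step1 : ∑ d ∈ A, w d = ∑ d ∈ A.filter Squarefree, w d := by
    rw [Finset.sum_filter_of_ne]
    intro d _ hd
    by_contra hsq
    exact hd (by rw [w, if_neg hsq])
  have inj : ∀ x ∈ A.filter Squarefree, ∀ y ∈ A.filter Squarefree,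
      x.primeFactors = y.primeFactors → x = y := by
    intro x hx y hy hxy
    have hx' := (Finset.mem_filter.mp hx).2
    have hy' := (Finset.mem_filter.mp hy).2
    rw [← Nat.prod_primeFactors_of_squarefree hx', ← Nat.prod_primeFactors_of_squarefree hy', hxy]
  have step2 : ∑ d ∈ A.filter Squarefree, w d
      = ∑ t ∈ (A.filter Squarefree).image Nat.primeFactors, ∏ p ∈ t, hh p := by
    rw [Finset.sum_image inj]
    apply Finset.sum_congr rfl
    intro d hd
    rw [w, if_pos (Finset.mem_filter.mp hd).2]
  have hsubset : (A.filter Squarefree).image Nat.primeFactors ⊆ P.powerset := by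
    intro t ht
    obtain ⟨d, hd, rfl⟩ := Finset.mem_image.mp ht
    have hdA := (Finset.mem_filter.mp hd).1
    have hdsq := (Finset.mem_filter.mp hd).2
    rw [Finset.mem_powerset]
    intro p hp
    have hpp := Nat.prime_of_mem_primeFactors hp
    have : p ≤ d := Nat.le_of_dvd (Nat.pos_of_ne_zero hdsq.ne_zero)
      (Nat.dvd_of_mem_primeFactors hp)
    have hdN : d ≤ N := Finset.le_sup (f := id) hdA
    exact Finset.mem_filter.mpr ⟨Finset.mem_range.mpr (by omega), hpp⟩
  have step3 : ∑ t ∈ (A.filter Squarefree).image Nat.primeFactors, ∏ p ∈ t, hh p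
      ≤ ∑ t ∈ P.powerset, ∏ p ∈ t, hh p := by
    apply Finset.sum_le_sum_of_subset_of_nonneg hsubset
    intro t ht _
    exact Finset.prod_nonneg fun p hp =>
      hh_nonneg (hP p (Finset.mem_powerset.mp ht hp))
  have step4 : ∑ t ∈ P.powerset, ∏ p ∈ t, hh p = ∏ p ∈ P, (hh p + 1) := by
    rw [Finset.prod_add]
    apply Finset.sum_congr rfl
    intro t _
    simp
  have step5 : ∏ p ∈ P, (hh p + 1) ≤ Real.exp (4 * cc) := by
    calc ∏ p ∈ P, (hh p + 1) ≤ ∏ p ∈ P, Real.exp (hh p) := by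
          apply Finset.prod_le_prod
          · intro p hp; have := hh_nonneg (hP p hp); linarith
          · intro p hp
            have := Real.add_one_le_exp (hh p)
            linarith
      _ = Real.exp (∑ p ∈ P, hh p) := (Real.exp_sum _ _).symm
      _ ≤ Real.exp (4 * cc) := Real.exp_le_exp.mpr (sum_hh_le hP)
  linarith [step1, step2, step3, step4, step5]

lemma summable_w : Summable w :=
  summable_of_sum_le (fun d => w_nonneg d) sum_w_le

noncomputable def F (d : ℕ) : ℝ := w d / d

lemma F_zero : F 0 = 0 := by simp [F]

lemma F_one : F 1 = 1 := by simp [F, w_one]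

lemma F_nonneg (d : ℕ) : 0 ≤ F d := div_nonneg (w_nonneg d) (Nat.cast_nonneg d)

lemma w_zero : w 0 = 0 := by rw [w, if_neg not_squarefree_zero]

lemma F_le_w (d : ℕ) : F d ≤ w d := by
  rcases Nat.eq_zero_or_pos d with h | h
  · simp [h, F, w_zero]
  · rw [F]
    apply div_le_self (w_nonneg d)
    exact_mod_cast h

lemma summable_F : Summable F := Summable.of_nonneg_of_le F_nonneg F_le_w summable_w

lemma w_mul {m n : ℕ} (h : m.Coprime n) (hm : m ≠ 0) (hn : n ≠ 0) :
    w (m * n) = w m * w n := by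
  have hiff := Nat.squarefree_mul h
  simp only [w]
  by_cases hsq : Squarefree (m * n)
  · rw [if_pos hsq, if_pos (hiff.mp hsq).1, if_pos (hiff.mp hsq).2,
      Nat.primeFactors_mul hm hn,
      Finset.prod_union (Nat.Coprime.disjoint_primeFactors h)]
  · rw [if_neg hsq]
    rcases not_and_or.mp (hiff.not.mp hsq) with h1 | h1
    · rw [if_neg h1, zero_mul]
    · rw [if_neg h1, mul_zero]

lemma F_mul {m n : ℕ} (h : m.Coprime n) : F (m * n) = F m * F n := by
  rcases Nat.eq_zero_or_pos m with hm | hm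
  · subst hm
    have : n = 1 := by simpa using h
    subst this
    simp [F_zero, F_one]
  rcases Nat.eq_zero_or_pos n with hn | hn
  · subst hn
    have : m = 1 := by simpa [Nat.coprime_zero_right] using h
    subst this
    simp [F_zero, F_one]
  · rw [F, F, F, w_mul h hm.ne' hn.ne', Nat.cast_mul]
    rw [div_mul_div_comm]

lemma F_prime {p : ℕ} (hp : p.Prime) : F p = hh p / p := by
  rw [F, w, if_pos hp.squarefree, Nat.Prime.primeFactors hp, Finset.prod_singleton]

lemma F_pow_eq_zero {p : ℕ} (hp : p.Prime) {e : ℕ} (he : 2 ≤ e) : F (p ^ e) = 0 := by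
  have hnsq : ¬ Squarefree (p ^ e) := by
    intro hsq
    have : p * p ∣ p ^ e := by
      have : p ^ 2 ∣ p ^ e := pow_dvd_pow p he
      simpa [sq] using this
    exact hp.one_lt.ne' (Nat.isUnit_iff.mp (hsq p this))
  rw [F, w, if_neg hnsq, zero_div]

lemma tsum_F_pow {p : ℕ} (hp : p.Prime) : ∑' e : ℕ, F (p ^ e) = (f0 p)⁻¹ := by
  rw [tsum_eq_sum (s := {0, 1}) (by
    intro e he
    simp only [Finset.mem_insert, Finset.mem_singleton] at he
    push_neg at he
    exact F_pow_eq_zero hp (by omega))]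
  rw [Finset.sum_insert (by simp), Finset.sum_singleton]
  rw [pow_zero, pow_one, F_one, F_prime hp, f0_inv hp]

noncomputable def S : ℝ := ∑' n, F n

lemma one_le_S : 1 ≤ S := by
  have := Summable.le_tsum summable_F 1 (fun b _ => F_nonneg b)
  rwa [F_one] at this

lemma S_pos : 0 < S := lt_of_lt_of_le one_pos one_le_S

lemma hasProd_inv_f0 : HasProd (fun p : Nat.Primes => (f0 p.1)⁻¹) S := by
  have hnorm : Summable (fun n => ‖F n‖) := by
    apply summable_F.congr
    intro n
    exact (Real.norm_of_nonneg (F_nonneg n)).symm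
  have h := EulerProduct.eulerProduct_hasProd F_one (fun {m n} h => F_mul h) hnorm F_zero
  have : (fun p : Nat.Primes => ∑' e : ℕ, F (p.1 ^ e)) = fun p : Nat.Primes => (f0 p.1)⁻¹ := by
    funext p
    exact tsum_F_pow p.2
  rwa [this] at h

lemma hasProd_f0 : HasProd (fun p : Nat.Primes => f0 p.1) S⁻¹ := by
  have h := hasProd_inv_f0
  rw [HasProd] at h ⊢
  have heq : ∀ A : Finset Nat.Primes,
      ∏ p ∈ A, f0 p.1 = (∏ p ∈ A, (f0 p.1)⁻¹)⁻¹ := by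
    intro A
    rw [← Finset.prod_inv_distrib]
    exact Finset.prod_congr rfl fun p _ => (inv_inv _).symm
  have := h.inv₀ S_pos.ne'
  apply this.congr
  intro A
  exact (heq A).symm

lemma neg_log_f0_le {p : ℕ} (hp : p.Prime) : -Real.log (f0 p) ≤ hh p := by
  rw [← Real.log_inv, f0_inv hp]
  have h1 : 0 ≤ hh p / p := div_nonneg (hh_nonneg hp) (Nat.cast_nonneg p)
  have h2 : Real.log (1 + hh p / p) ≤ hh p / p := by
    have := Real.log_le_sub_one_of_pos (x := 1 + hh p / p) (by linarith)
    linarith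
  have h3 : hh p / p ≤ hh p := by
    apply div_le_self (hh_nonneg hp)
    exact_mod_cast hp.one_lt.le
  linarith

lemma neg_log_f0_nonneg {p : ℕ} (hp : p.Prime) : 0 ≤ -Real.log (f0 p) := by
  rw [← Real.log_inv, f0_inv hp]
  apply Real.log_nonneg
  have h1 : 0 ≤ hh p / p := div_nonneg (hh_nonneg hp) (Nat.cast_nonneg p)
  linarith

lemma multipliable_f0_comp {ι : Type*} (g : ι → ℕ) (hg : ∀ i, (g i).Prime)
    (hinj : Function.Injective g) : Multipliable (fun i => f0 (g i)) := by
  have hL : Summable (fun i => -Real.log (f0 (g i))) := by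
    apply summable_of_sum_le (c := 4 * cc)
    · intro i
      exact neg_log_f0_nonneg (hg i)
    · intro A
      calc ∑ i ∈ A, -Real.log (f0 (g i)) ≤ ∑ i ∈ A, hh (g i) :=
            Finset.sum_le_sum fun i _ => neg_log_f0_le (hg i)
        _ = ∑ p ∈ A.image g, hh p := (Finset.sum_image fun x _ y _ h => hinj h).symm
        _ ≤ 4 * cc := sum_hh_le fun p hp => by
            obtain ⟨i, _, rfl⟩ := Finset.mem_image.mp hp
            exact hg i
  have hlog : Summable (fun i => Real.log (f0 (g i))) := by
    simpa using hL.neg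
  exact Real.multipliable_of_summable_log (fun i => f0_pos (hg i)) hlog

lemma Kr_eq {r : ℕ} (hr : r ≠ 0) :
    Kr r = S⁻¹ * ∏ p ∈ r.primeFactors, (1 + hh p) := by
  classical
  set s : Finset Nat.Primes := r.primeFactors.subtype Nat.Prime with hs
  have hmem : ∀ p : Nat.Primes, p ∈ s ↔ p.1 ∣ r := by
    intro p
    have h := Finset.mem_subtype (p := Nat.Prime) (s := r.primeFactors) (a := (p : {x // Nat.Prime x}))
    refine h.trans ?_
    rw [Nat.mem_primeFactors]
    constructor
    · rintro ⟨-, h, -⟩; exact h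
    · intro h; exact ⟨p.2, h, hr⟩
  let e : {l : ℕ // l.Prime ∧ ¬ (l ∣ r)} ≃ ↑((s : Set Nat.Primes)ᶜ) :=
    { toFun := fun l => ⟨⟨l.1, l.2.1⟩, by
        exact fun h => l.2.2 ((hmem ⟨l.1, l.2.1⟩).mp h)⟩
      invFun := fun p => ⟨p.1.1, ⟨p.1.2, by
        have := p.2
        simp only [Set.mem_compl_iff, Finset.mem_coe, hmem] at this
        exact this⟩⟩
      left_inv := fun l => rfl
      right_inv := fun p => rfl }
  have htp : (∏' l : {l : ℕ // l.Prime ∧ ¬ (l ∣ r)},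
      ((l.1 : ℝ) * ((l.1 : ℝ) ^ 2 - l.1 - 1) / (((l.1 : ℝ) - 1) * ((l.1 : ℝ) ^ 2 - 1))))
      = ∏' p : ↑((s : Set Nat.Primes)ᶜ), f0 p.1.1 := by
    refine Eq.trans ?_ (e.tprod_eq (fun p : ↑((s : Set Nat.Primes)ᶜ) => f0 p.1.1))
    exact tprod_congr fun l => rfl
  have hms : Multipliable ((fun p : Nat.Primes => f0 p.1) ∘ ((↑) : ↑(s : Set Nat.Primes) → Nat.Primes)) :=
    (hasProd_fintype _).multipliable
  have hmc : Multipliable ((fun p : Nat.Primes => f0 p.1) ∘ ((↑) : ↑((s : Set Nat.Primes)ᶜ) → Nat.Primes)) := by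
    apply multipliable_f0_comp (fun x : ↑((s : Set Nat.Primes)ᶜ) => x.1.1)
    · intro i; exact i.1.2
    · intro x y hxy
      apply Subtype.ext
      apply Subtype.ext
      exact hxy
  have hsplit := Multipliable.tprod_mul_tprod_compl (f := fun p : Nat.Primes => f0 p.1) hms hmc
  rw [hasProd_f0.tprod_eq] at hsplit
  have hfin : (∏' x : ↑(s : Set Nat.Primes), f0 (x : Nat.Primes).1) = ∏ p ∈ s, f0 p.1 := by
    rw [tprod_fintype]
    exact Finset.prod_coe_sort s (fun p => f0 p.1)
  have hprod_s : ∏ p ∈ s, f0 p.1 = ∏ l ∈ r.primeFactors, f0 l := by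
    apply Finset.prod_bij (fun (p : Nat.Primes) _ => p.1)
    · intro p hp; exact (Finset.mem_subtype (p := Nat.Prime) (s := r.primeFactors) (a := (p : {x // Nat.Prime x}))).mp hp
    · intro a ha b hb h; exact Subtype.ext h
    · intro l hl
      exact ⟨⟨l, Nat.prime_of_mem_primeFactors hl⟩, (Finset.mem_subtype (p := Nat.Prime) (s := r.primeFactors) (a := (⟨l, Nat.prime_of_mem_primeFactors hl⟩ : {x // Nat.Prime x}))).mpr hl, rfl⟩
    · intro p hp; rfl
  have hprod_ne : ∏ l ∈ r.primeFactors, f0 l ≠ 0 :=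
    Finset.prod_ne_zero_iff.mpr fun p hp _ => f0_ne (Nat.prime_of_mem_primeFactors hp) (by assumption)
  have htprod_val : (∏' p : ↑((s : Set Nat.Primes)ᶜ), f0 p.1.1)
      = S⁻¹ / ∏ l ∈ r.primeFactors, f0 l := by
    rw [eq_div_iff hprod_ne, ← hprod_s, ← hfin, mul_comm]
    exact hsplit
  rw [Kr, htp, htprod_val]
  rw [div_eq_mul_inv, ← Finset.prod_inv_distrib]
  rw [show (∏ l ∈ r.primeFactors, (1 - ((l:ℝ)^2)⁻¹)⁻¹) *
      ((S⁻¹) * ∏ l ∈ r.primeFactors, (f0 l)⁻¹)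
      = S⁻¹ * ∏ l ∈ r.primeFactors, ((1 - ((l:ℝ)^2)⁻¹)⁻¹ * (f0 l)⁻¹) from by
    rw [Finset.prod_mul_distrib]; ring]
  congr 1
  apply Finset.prod_congr rfl
  intro p hp
  have hpp := Nat.prime_of_mem_primeFactors hp
  rw [one_sub_inv hpp, mul_comm (f0 p), mul_assoc, mul_inv_cancel₀ (f0_ne hpp), mul_one]

lemma expand {r : ℕ} (hr : r ≠ 0) :
    ∏ p ∈ r.primeFactors, (1 + hh p) = ∑ d ∈ r.divisors, w d := by
  classical
  have h2 : ∑ d ∈ r.divisors, w d = ∑ d ∈ r.divisors with Squarefree d, w d := by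
    rw [Finset.sum_filter_of_ne]
    intro d _ hd
    by_contra hsq
    exact hd (by rw [w, if_neg hsq])
  rw [h2, Nat.sum_divisors_filter_squarefree hr]
  have hfac : (UniqueFactorizationMonoid.normalizedFactors r).toFinset = r.primeFactors := by
    simp [Nat.factors_eq]
  rw [hfac]
  rw [show (∏ p ∈ r.primeFactors, (1 + hh p)) = ∏ p ∈ r.primeFactors, (hh p + 1) from
    Finset.prod_congr rfl fun p _ => by ring]
  rw [Finset.prod_add]
  apply Finset.sum_congr rfl
  intro t ht
  have htp : ∀ p ∈ t, p.Prime := fun p hp =>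
    Nat.prime_of_mem_primeFactors (Finset.mem_powerset.mp ht hp)
  have hval : (t.val.prod : ℕ) = ∏ p ∈ t, p := by
    rw [Finset.prod_eq_multiset_prod]
    congr 1
    exact (Multiset.map_id' _).symm
  rw [hval, w_prod htp]
  simp

lemma divisors_eq {r b : ℕ} (h0 : 0 < r) (hrb : r ≤ b) :
    r.divisors = (Finset.Ioc 0 b).filter (· ∣ r) := by
  ext d
  rw [Nat.mem_divisors, Finset.mem_filter, Finset.mem_Ioc]
  constructor
  · rintro ⟨hd, -⟩
    exact ⟨⟨Nat.pos_of_dvd_of_pos hd h0, le_trans (Nat.le_of_dvd h0 hd) hrb⟩, hd⟩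
  · rintro ⟨-, hd⟩
    exact ⟨hd, h0.ne'⟩

lemma card_mult {a b d : ℕ} (hab : a ≤ b) :
    ((Finset.Ioc a b).filter (d ∣ ·)).card = b / d - a / d := by
  have h1 := Nat.Ioc_filter_dvd_card_eq_div b d
  have h2 := Nat.Ioc_filter_dvd_card_eq_div a d
  have hunion : Finset.Ioc 0 a ∪ Finset.Ioc a b = Finset.Ioc 0 b :=
    Finset.Ioc_union_Ioc_eq_Ioc (Nat.zero_le a) hab
  have hdisj : Disjoint (Finset.Ioc 0 a) (Finset.Ioc a b) := by
    rw [Finset.disjoint_left]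
    intro x hx hy
    rw [Finset.mem_Ioc] at hx hy
    omega
  rw [← hunion, Finset.filter_union,
    Finset.card_union_of_disjoint (Finset.disjoint_filter_filter hdisj)] at h1
  omega

lemma swap_sum {a b : ℕ} (hab : a ≤ b) :
    ∑ r ∈ Finset.Ioc a b, ∑ d ∈ r.divisors, w d
      = ∑ d ∈ Finset.Ioc 0 b, w d * (((b / d : ℕ) : ℝ) - ((a / d : ℕ) : ℝ)) := by
  classical
  have step1 : ∀ r ∈ Finset.Ioc a b, ∑ d ∈ r.divisors, w d
      = ∑ d ∈ Finset.Ioc 0 b, if d ∣ r then w d else 0 := by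
    intro r hr
    rw [Finset.mem_Ioc] at hr
    rw [divisors_eq (show 0 < r by omega) hr.2]
    rw [Finset.sum_filter]
  rw [Finset.sum_congr rfl step1, Finset.sum_comm]
  apply Finset.sum_congr rfl
  intro d hd
  rw [← Finset.sum_filter, Finset.sum_const, nsmul_eq_mul, mul_comm]
  congr 1
  rw [show ((Finset.Ioc a b).filter (fun r => d ∣ r)).card = b / d - a / d from card_mult hab]
  have : a / d ≤ b / d := Nat.div_le_div_right hab
  push_cast [Nat.cast_sub this]
  ring

lemma count_approx {a b d : ℕ} {u v : ℝ} (hd : 0 < d) (hua : (a:ℝ) ≤ u) (hua2 : u < a + 1)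
    (hub : (b:ℝ) ≤ u + v) (hub2 : u + v < b + 1) :
    |((b / d : ℕ) : ℝ) - ((a / d : ℕ) : ℝ) - v / d| ≤ 2 := by
  have hdpos : (0:ℝ) < d := by exact_mod_cast hd
  have hd1 : (1:ℝ) ≤ d := by exact_mod_cast hd
  set X : ℝ := ((b / d : ℕ) : ℝ)
  set Y : ℝ := ((a / d : ℕ) : ℝ)
  have hXd : X * d ≤ (b:ℝ) := by
    show ((b / d : ℕ) : ℝ) * d ≤ (b:ℝ)
    exact_mod_cast Nat.div_mul_le_self b d
  have hYd : Y * d ≤ (a:ℝ) := by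
    show ((a / d : ℕ) : ℝ) * d ≤ (a:ℝ)
    exact_mod_cast Nat.div_mul_le_self a d
  have hXd2 : (b:ℝ) < X * d + d := by
    have hmod := Nat.div_add_mod b d
    have hlt : b % d < d := Nat.mod_lt _ hd
    have hc : ((d:ℝ)) * ((b / d : ℕ) : ℝ) + ((b % d : ℕ) : ℝ) = (b:ℝ) := by
      exact_mod_cast hmod
    have hltr : ((b % d : ℕ) : ℝ) < d := by exact_mod_cast hlt
    nlinarith [hc, hltr]
  have hYd2 : (a:ℝ) < Y * d + d := by
    have hmod := Nat.div_add_mod a d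
    have hlt : a % d < d := Nat.mod_lt _ hd
    have hc : ((d:ℝ)) * ((a / d : ℕ) : ℝ) + ((a % d : ℕ) : ℝ) = (a:ℝ) := by
      exact_mod_cast hmod
    have hltr : ((a % d : ℕ) : ℝ) < d := by exact_mod_cast hlt
    nlinarith [hc, hltr]
  have key1 : v ≤ ((X - Y) + 2) * d := by nlinarith
  have key2 : ((X - Y) - 2) * d ≤ v := by nlinarith
  rw [abs_le]
  constructor
  · have := (div_le_iff₀ hdpos).mpr key1
    linarith
  · have := (le_div_iff₀ hdpos).mpr key2
    linarith

noncomputable def W : ℝ := ∑' d, w d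

lemma W_nonneg : 0 ≤ W := tsum_nonneg w_nonneg

end KrAux

open KrAux in
theorem Kr_average :
    ∃ C : ℝ, 0 < C ∧ ∀ u v : ℝ, 0 ≤ u → 1 ≤ v →
      |(∑ r ∈ Finset.Ioc ⌊u⌋₊ ⌊u + v⌋₊, Kr r) - v| ≤ C := by
  classical
  refine ⟨3 * W + 1, by have := W_nonneg; linarith, ?_⟩
  intro u v hu hv
  set a := ⌊u⌋₊ with ha
  set b := ⌊u + v⌋₊ with hb
  have hab : a ≤ b := Nat.floor_mono (by linarith)
  have hua : (a:ℝ) ≤ u := Nat.floor_le hu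
  have hua2 : u < a + 1 := Nat.lt_floor_add_one u
  have hub : (b:ℝ) ≤ u + v := Nat.floor_le (by linarith)
  have hub2 : u + v < b + 1 := Nat.lt_floor_add_one _
  -- Step 1: rewrite the sum
  have hstep1 : ∑ r ∈ Finset.Ioc a b, Kr r
      = S⁻¹ * ∑ d ∈ Finset.Ioc 0 b, w d * (((b / d : ℕ) : ℝ) - ((a / d : ℕ) : ℝ)) := by
    rw [← swap_sum hab, Finset.mul_sum]
    apply Finset.sum_congr rfl
    intro r hr
    rw [Finset.mem_Ioc] at hr
    have hr0 : r ≠ 0 := by omega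
    rw [Kr_eq hr0, expand hr0]
  -- Step 2: decompose v * S
  have hsumvF : Summable (fun d => v * F d) := summable_F.mul_left v
  have hdecomp : ∑ d ∈ Finset.Ioc 0 b, v * F d
      + ∑' d : ↑((↑(Finset.Ioc 0 b) : Set ℕ)ᶜ), v * F d.1 = v * S := by
    have := Summable.sum_add_tsum_compl (s := Finset.Ioc 0 b) (f := fun d => v * F d) hsumvF
    have hS : S = ∑' n, F n := rfl
    rw [this, hS, ← tsum_mul_left]
  set T := ∑ d ∈ Finset.Ioc 0 b, w d * (((b / d : ℕ) : ℝ) - ((a / d : ℕ) : ℝ)) with hT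
  set tail := ∑' d : ↑((↑(Finset.Ioc 0 b) : Set ℕ)ᶜ), v * F d.1 with htail
  -- tail bounds
  have hvb1 : v ≤ (b:ℝ) + 1 := by linarith
  have htail_nonneg : 0 ≤ tail :=
    tsum_nonneg fun d => mul_nonneg (by linarith) (F_nonneg _)
  have htail_le : tail ≤ W := by
    have h1 : tail ≤ ∑' d : ↑((↑(Finset.Ioc 0 b) : Set ℕ)ᶜ), w d.1 := by
      apply Summable.tsum_le_tsum _ (hsumvF.subtype _) (summable_w.subtype _)
      rintro ⟨d, hd⟩
      simp only [Set.mem_compl_iff, Finset.mem_coe, Finset.mem_Ioc] at hd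
      push_neg at hd
      rcases Nat.eq_zero_or_pos d with h0 | h0
      · subst h0
        have : F 0 = 0 := by simp [F]
        simp [this, w_nonneg 0]
      · have hdb : b < d := by omega
        have hdr : (b:ℝ) + 1 ≤ d := by exact_mod_cast hdb
        have hdpos : (0:ℝ) < d := by positivity
        calc v * F d = v * (w d / d) := rfl
          _ ≤ (d:ℝ) * (w d / d) := by
              apply mul_le_mul_of_nonneg_right (by linarith)
              exact div_nonneg (w_nonneg d) hdpos.le
          _ = w d := by field_simp
    have h2 : ∑' d : ↑((↑(Finset.Ioc 0 b) : Set ℕ)ᶜ), w d.1 ≤ W :=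
      Summable.tsum_subtype_le w _ w_nonneg summable_w
    linarith
  -- main term bound
  have hmain : |T - ∑ d ∈ Finset.Ioc 0 b, v * F d| ≤ 2 * W := by
    rw [← Finset.sum_sub_distrib]
    calc |∑ d ∈ Finset.Ioc 0 b, (w d * (((b / d : ℕ) : ℝ) - ((a / d : ℕ) : ℝ)) - v * F d)|
        ≤ ∑ d ∈ Finset.Ioc 0 b, |w d * (((b / d : ℕ) : ℝ) - ((a / d : ℕ) : ℝ)) - v * F d| :=
          Finset.abs_sum_le_sum_abs _ _
      _ ≤ ∑ d ∈ Finset.Ioc 0 b, 2 * w d := by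
          apply Finset.sum_le_sum
          intro d hd
          rw [Finset.mem_Ioc] at hd
          have hd0 : (0:ℝ) < d := by exact_mod_cast hd.1
          have heq : w d * (((b / d : ℕ) : ℝ) - ((a / d : ℕ) : ℝ)) - v * F d
              = w d * ((((b / d : ℕ) : ℝ) - ((a / d : ℕ) : ℝ)) - v / d) := by
            rw [F]
            field_simp
          rw [heq, abs_mul, abs_of_nonneg (w_nonneg d)]
          have := count_approx hd.1 hua hua2 hub hub2
          calc w d * |(((b / d : ℕ) : ℝ) - ((a / d : ℕ) : ℝ)) - v / d| ≤ w d * 2 :=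
                mul_le_mul_of_nonneg_left this (w_nonneg d)
            _ = 2 * w d := by ring
      _ ≤ 2 * W := by
          rw [← Finset.mul_sum]
          have : ∑ d ∈ Finset.Ioc 0 b, w d ≤ W :=
            Summable.sum_le_tsum _ (fun d _ => w_nonneg d) summable_w
          linarith
  -- final assembly
  have hS_inv_le : S⁻¹ ≤ 1 := by
    rw [inv_le_one_iff₀]
    right; exact one_le_S
  have hS_inv_pos : 0 < S⁻¹ := inv_pos.mpr S_pos
  have hv_eq : v = S⁻¹ * (v * S) := by
    field_simp
    rw [div_self S_pos.ne']
  rw [hstep1]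
  calc |S⁻¹ * T - v| = S⁻¹ * |T - v * S| := by
        rw [hv_eq, ← mul_sub, abs_mul, abs_of_pos hS_inv_pos]
        rw [← hv_eq]
    _ ≤ 1 * |T - v * S| := by
        apply mul_le_mul_of_nonneg_right hS_inv_le (abs_nonneg _)
    _ ≤ 3 * W + 1 := by
        rw [one_mul, ← hdecomp]
        have : |T - (∑ d ∈ Finset.Ioc 0 b, v * F d + tail)|
            ≤ |T - ∑ d ∈ Finset.Ioc 0 b, v * F d| + |tail| := by
          rw [sub_add_eq_sub_sub]
          exact abs_sub (T - ∑ d ∈ Finset.Ioc 0 b, v * F d) tail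
        rw [abs_of_nonneg htail_nonneg] at this
        linarith
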